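/- Let k ≥ 1 be an integer and let μ_1, …, μ_k be strictly positive real numbers. Let X_1, …, X_k be independent random variables, with X_i exponentially distributed with rate μ_i. Then lim_{t → 0+} P(X_1 + ⋯ + X_k ≤ t)/t^k = (Π_{i=1}^k μ_i)/k!. (Equivalently, the distribution function of the sum behaves like μ_1⋯μ_k t^k/k! for small t, the multistage-carcinogenesis approximation of Armitage and Doll.) -/

import Mathlib

open MeasureTheory ProbabilityTheory Real Set

namespace ArmitageDollAux

lemma expMeasure_eq (r : ℝ) : expMeasure r = volume.withDensity (exponentialPDF r) := rfl

lemma expMeasure_Iio_zero (r : ℝ) : expMeasure r (Iio 0) = 0 := by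
  rw [expMeasure_eq, withDensity_apply _ measurableSet_Iio]
  exact lintegral_exponentialPDF_of_nonpos le_rfl

lemma pi_exp_neg {n : ℕ} (μ : Fin n → ℝ) (hμ : ∀ i, 0 < μ i) {t : ℝ} (ht : t < 0) :
    Measure.pi (fun i => expMeasure (μ i)) {x : Fin n → ℝ | ∑ i, x i ≤ t} = 0 := by
  haveI : ∀ i, IsProbabilityMeasure (expMeasure (μ i)) :=
    fun i => isProbabilityMeasure_expMeasure (hμ i)
  refine measure_mono_null (t := ⋃ i, Function.eval i ⁻¹' Iio (0:ℝ)) ?_ ?_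
  · intro x hx
    by_contra hc
    simp only [mem_iUnion, mem_preimage, mem_Iio, not_exists, not_lt, Function.eval] at hc
    have : (0:ℝ) ≤ ∑ i, x i := Finset.sum_nonneg fun i _ => hc i
    exact absurd (le_trans this hx) (not_le.2 ht)
  · exact measure_iUnion_null fun i => Measure.pi_eval_preimage_null _ (expMeasure_Iio_zero _)

lemma lint_pow (n : ℕ) (c t : ℝ) (hc : 0 ≤ c) (ht : 0 ≤ t) :
    ∫⁻ a in Icc (0:ℝ) t, ENNReal.ofReal (c * (t - a) ^ n)
      = ENNReal.ofReal (c * t ^ (n+1) / (n+1 : ℝ)) := by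
  have hcont : Continuous fun a : ℝ => c * (t - a) ^ n := by continuity
  rw [← ofReal_integral_eq_lintegral_ofReal (hcont.integrableOn_Icc)
    (ae_restrict_of_forall_mem measurableSet_Icc fun a ha =>
      mul_nonneg hc (pow_nonneg (by linarith [ha.2]) n))]
  congr 1
  rw [integral_Icc_eq_integral_Ioc, ← intervalIntegral.integral_of_le ht,
    intervalIntegral.integral_const_mul]
  have h1 : ∫ a in (0:ℝ)..t, (t - a) ^ n = ∫ x in (t - t)..(t - 0), x ^ n :=
    intervalIntegral.integral_comp_sub_left (fun x : ℝ => x ^ n) t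
  rw [h1]
  simp only [sub_self, sub_zero]
  rw [integral_pow]
  rw [zero_pow (by omega)]
  ring

lemma simplex_bounds : ∀ (n : ℕ) (μ : Fin n → ℝ), (∀ i, 0 < μ i) → ∀ t : ℝ, 0 ≤ t →
    ENNReal.ofReal ((∏ i, μ i) / n.factorial * t ^ n * rexp (-(∑ i, μ i) * t))
      ≤ Measure.pi (fun i => expMeasure (μ i)) {x : Fin n → ℝ | ∑ i, x i ≤ t} ∧
    Measure.pi (fun i => expMeasure (μ i)) {x : Fin n → ℝ | ∑ i, x i ≤ t}
      ≤ ENNReal.ofReal ((∏ i, μ i) / n.factorial * t ^ n) := by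
  intro n
  induction n with
  | zero =>
    intro μ hμ t ht
    have hs : {x : Fin 0 → ℝ | ∑ i, x i ≤ t} = univ := by
      ext x; simp [ht]
    rw [hs, Measure.pi_of_empty, Measure.dirac_apply_of_mem (mem_univ _)]
    simp
  | succ n ih =>
    intro μ hμ t ht
    haveI : ∀ i, IsProbabilityMeasure (expMeasure (μ i)) :=
      fun i => isProbabilityMeasure_expMeasure (hμ i)
    set A : Set (ℝ × (Fin n → ℝ)) := {p | p.1 + ∑ i, p.2 i ≤ t} with hAdef
    have hA : MeasurableSet A := by
      apply measurableSet_le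
      · exact measurable_fst.add
          (Finset.measurable_sum _ fun i _ => (measurable_pi_apply i).comp measurable_snd)
      · exact measurable_const
    have hpre : (MeasurableEquiv.piFinSuccAbove (fun _ : Fin (n+1) => ℝ) 0) ⁻¹' A
        = {x : Fin (n+1) → ℝ | ∑ i, x i ≤ t} := by
      ext x
      simp [A, MeasurableEquiv.piFinSuccAbove_apply, Fin.removeNth, Fin.succAbove_zero,
        Fin.sum_univ_succ, Fin.tail]
    have hmp := measurePreserving_piFinSuccAbove (fun i : Fin (n+1) => expMeasure (μ i)) 0
    have hsec : ∀ a : ℝ, (Prod.mk a ⁻¹' A) = {y : Fin n → ℝ | ∑ i, y i ≤ t - a} := by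
      intro a; ext y
      simp only [A, mem_preimage, mem_setOf_eq]
      constructor <;> intro h <;> linarith
    have key : Measure.pi (fun i => expMeasure (μ i)) {x : Fin (n+1) → ℝ | ∑ i, x i ≤ t}
        = ∫⁻ a, exponentialPDF (μ 0) a *
            Measure.pi (fun j : Fin n => expMeasure (μ j.succ)) {y | ∑ i, y i ≤ t - a} := by
      rw [← hpre, hmp.measure_preimage_equiv, Measure.prod_apply hA]
      simp only [hsec, Fin.succAbove_zero]
      have hm : Measurable (exponentialPDF (μ 0)) :=
        (measurable_exponentialPDFReal (μ 0)).ennreal_ofReal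
      rw [expMeasure_eq, lintegral_withDensity_eq_lintegral_mul_non_measurable _ hm
        (Filter.Eventually.of_forall fun x => ENNReal.ofReal_lt_top)]
      rfl
    have hPt : (0:ℝ) ≤ ∏ j : Fin n, μ j.succ :=
      Finset.prod_nonneg fun j _ => (hμ j.succ).le
    have hMt : (0:ℝ) ≤ ∑ j : Fin n, μ j.succ :=
      Finset.sum_nonneg fun j _ => (hμ j.succ).le
    have hfac : (0:ℝ) < (n.factorial : ℝ) := by positivity
    constructor
    · -- lower bound
      rw [key]
      set Clo : ℝ := μ 0 * ((∏ j : Fin n, μ j.succ) / n.factorial) *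
        rexp (-(∑ i : Fin (n+1), μ i) * t) with hClo
      have hClo0 : 0 ≤ Clo := by
        apply mul_nonneg (mul_nonneg (hμ 0).le (div_nonneg hPt hfac.le)) (exp_pos _).le
      have hge : ∀ a : ℝ, (Icc (0:ℝ) t).indicator
          (fun a => ENNReal.ofReal (Clo * (t - a) ^ n)) a
          ≤ exponentialPDF (μ 0) a *
            Measure.pi (fun j : Fin n => expMeasure (μ j.succ)) {y | ∑ i, y i ≤ t - a} := by
        intro a
        by_cases ha : a ∈ Icc (0:ℝ) t
        · rw [indicator_of_mem ha, exponentialPDF_of_nonneg ha.1]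
          have hta : (0:ℝ) ≤ t - a := by linarith [ha.2]
          have hreal : Clo * (t - a) ^ n
              ≤ (μ 0 * rexp (-(μ 0 * a))) *
                ((∏ j : Fin n, μ j.succ) / n.factorial * (t - a) ^ n *
                  rexp (-(∑ j : Fin n, μ j.succ) * (t - a))) := by
            have hB : 0 ≤ μ 0 * ((∏ j : Fin n, μ j.succ) / n.factorial) * (t - a) ^ n :=
              mul_nonneg (mul_nonneg (hμ 0).le (div_nonneg hPt hfac.le)) (pow_nonneg hta n)
            have h1 : rexp (-(μ 0 * t)) ≤ rexp (-(μ 0 * a)) := by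
              apply exp_le_exp.2
              have := hμ 0
              nlinarith [ha.1, ha.2]
            have h2 : rexp (-((∑ j : Fin n, μ j.succ) * t))
                ≤ rexp (-(∑ j : Fin n, μ j.succ) * (t - a)) := by
              apply exp_le_exp.2
              nlinarith [ha.1]
            have hsum : -(∑ i : Fin (n+1), μ i) * t
                = -(μ 0 * t) + -((∑ j : Fin n, μ j.succ) * t) := by
              rw [Fin.sum_univ_succ]; ring
            calc Clo * (t - a) ^ n
                = (μ 0 * ((∏ j : Fin n, μ j.succ) / n.factorial) * (t - a) ^ n) *
                  (rexp (-(μ 0 * t)) * rexp (-((∑ j : Fin n, μ j.succ) * t))) := by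
                  rw [hClo, hsum, exp_add]; ring
              _ ≤ (μ 0 * ((∏ j : Fin n, μ j.succ) / n.factorial) * (t - a) ^ n) *
                  (rexp (-(μ 0 * a)) * rexp (-(∑ j : Fin n, μ j.succ) * (t - a))) := by
                  apply mul_le_mul_of_nonneg_left
                    (mul_le_mul h1 h2 (exp_pos _).le (exp_pos _).le) hB
              _ = _ := by ring
          calc ENNReal.ofReal (Clo * (t - a) ^ n)
              ≤ ENNReal.ofReal ((μ 0 * rexp (-(μ 0 * a))) *
                ((∏ j : Fin n, μ j.succ) / n.factorial * (t - a) ^ n *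
                  rexp (-(∑ j : Fin n, μ j.succ) * (t - a)))) :=
                ENNReal.ofReal_le_ofReal hreal
            _ = ENNReal.ofReal (μ 0 * rexp (-(μ 0 * a))) *
                ENNReal.ofReal ((∏ j : Fin n, μ j.succ) / n.factorial * (t - a) ^ n *
                  rexp (-(∑ j : Fin n, μ j.succ) * (t - a))) :=
                ENNReal.ofReal_mul (mul_nonneg (hμ 0).le (exp_pos _).le)
            _ ≤ _ := by
                apply mul_le_mul' le_rfl
                exact (ih (fun j => μ j.succ) (fun j => hμ j.succ) (t - a) hta).1
        · rw [indicator_of_notMem ha]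
          exact zero_le
      calc ENNReal.ofReal ((∏ i : Fin (n+1), μ i) / (n+1).factorial * t ^ (n+1) *
            rexp (-(∑ i : Fin (n+1), μ i) * t))
          = ENNReal.ofReal (Clo * t ^ (n+1) / (n+1 : ℝ)) := by
            congr 1
            have hn1 : ((n:ℝ)+1) ≠ 0 := by positivity
            have hnf : (n.factorial:ℝ) ≠ 0 := ne_of_gt hfac
            rw [hClo, Fin.prod_univ_succ, Nat.factorial_succ]
            push_cast
            field_simp
        _ = ∫⁻ a in Icc (0:ℝ) t, ENNReal.ofReal (Clo * (t - a) ^ n) :=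
            (lint_pow n Clo t hClo0 ht).symm
        _ = ∫⁻ a, (Icc (0:ℝ) t).indicator (fun a => ENNReal.ofReal (Clo * (t - a) ^ n)) a :=
            (lintegral_indicator measurableSet_Icc _).symm
        _ ≤ _ := lintegral_mono hge
    · -- upper bound
      rw [key]
      set Cup : ℝ := μ 0 * ((∏ j : Fin n, μ j.succ) / n.factorial) with hCup
      have hCup0 : 0 ≤ Cup := mul_nonneg (hμ 0).le (div_nonneg hPt hfac.le)
      have hle : ∀ a : ℝ, exponentialPDF (μ 0) a *
          Measure.pi (fun j : Fin n => expMeasure (μ j.succ)) {y | ∑ i, y i ≤ t - a}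
          ≤ (Icc (0:ℝ) t).indicator (fun a => ENNReal.ofReal (Cup * (t - a) ^ n)) a := by
        intro a
        by_cases ha0 : 0 ≤ a
        · by_cases hat : a ≤ t
          · rw [indicator_of_mem (mem_Icc.2 ⟨ha0, hat⟩), exponentialPDF_of_nonneg ha0]
            have hta : (0:ℝ) ≤ t - a := by linarith
            calc ENNReal.ofReal (μ 0 * rexp (-(μ 0 * a))) *
                  Measure.pi (fun j : Fin n => expMeasure (μ j.succ)) {y | ∑ i, y i ≤ t - a}
                ≤ ENNReal.ofReal (μ 0) *
                  ENNReal.ofReal ((∏ j : Fin n, μ j.succ) / n.factorial * (t - a) ^ n) := by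
                  apply mul_le_mul'
                  · apply ENNReal.ofReal_le_ofReal
                    have h1 : rexp (-(μ 0 * a)) ≤ 1 := by
                      apply exp_le_one_iff.2
                      have := hμ 0
                      nlinarith
                    nlinarith [(hμ 0).le, exp_pos (-(μ 0 * a))]
                  · exact (ih (fun j => μ j.succ) (fun j => hμ j.succ) (t - a) hta).2
              _ = ENNReal.ofReal (Cup * (t - a) ^ n) := by
                  rw [← ENNReal.ofReal_mul (hμ 0).le, hCup]
                  congr 1
                  ring
          · rw [indicator_of_notMem (fun h => hat h.2),
              pi_exp_neg _ (fun j => hμ j.succ) (by linarith), mul_zero]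
        · rw [indicator_of_notMem (fun h => ha0 h.1),
            exponentialPDF_of_neg (lt_of_not_ge ha0), zero_mul]
      calc ∫⁻ a, exponentialPDF (μ 0) a *
            Measure.pi (fun j : Fin n => expMeasure (μ j.succ)) {y | ∑ i, y i ≤ t - a}
          ≤ ∫⁻ a, (Icc (0:ℝ) t).indicator (fun a => ENNReal.ofReal (Cup * (t - a) ^ n)) a :=
            lintegral_mono hle
        _ = ∫⁻ a in Icc (0:ℝ) t, ENNReal.ofReal (Cup * (t - a) ^ n) :=
            lintegral_indicator measurableSet_Icc _
        _ = ENNReal.ofReal (Cup * t ^ (n+1) / (n+1 : ℝ)) := lint_pow n Cup t hCup0 ht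
        _ = ENNReal.ofReal ((∏ i : Fin (n+1), μ i) / (n+1).factorial * t ^ (n+1)) := by
            congr 1
            have hn1 : ((n:ℝ)+1) ≠ 0 := by positivity
            have hnf : (n.factorial:ℝ) ≠ 0 := ne_of_gt hfac
            rw [hCup, Fin.prod_univ_succ, Nat.factorial_succ]
            push_cast
            field_simp

end ArmitageDollAux


open MeasureTheory ProbabilityTheory in
/-- Armitage–Doll small-time asymptotics.  Let `k ≥ 1`, let
`μ_1, …, μ_k > 0`, and let `X_1, …, X_k` be independent random variables with `X_i`
exponential of rate `μ_i` (i.e. `P(X_i > t) = e^{−μ_i t}` for `t ≥ 0`).  Then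
`P(X_1 + ⋯ + X_k ≤ t)/t^k → (Π_i μ_i)/k!` as `t → 0+`. -/
theorem armitage_doll_small_time {Ω : Type*} [MeasureSpace Ω]
    [IsProbabilityMeasure (ℙ : Measure Ω)] (k : ℕ) (hk : 1 ≤ k)
    (μ : Fin k → ℝ) (hμ : ∀ i, 0 < μ i) (X : Fin k → Ω → ℝ)
    (hmeas : ∀ i, Measurable (X i))
    (hindep : iIndepFun X ℙ)
    (hexp : ∀ i, ∀ t : ℝ, 0 ≤ t →
      ℙ {ω | t < X i ω} = ENNReal.ofReal (Real.exp (-μ i * t))) :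
    Filter.Tendsto (fun t : ℝ => (ℙ {ω | ∑ i, X i ω ≤ t}).toReal / t ^ k)
      (nhdsWithin 0 (Set.Ioi 0))
      (nhds ((∏ i, μ i) / (Nat.factorial k : ℝ))) := by
  classical
  haveI hPM : ∀ i, IsProbabilityMeasure (expMeasure (μ i)) :=
    fun i => isProbabilityMeasure_expMeasure (hμ i)
  have hmap : ∀ i, Measure.map (X i) ℙ = expMeasure (μ i) := by
    intro i
    haveI : IsProbabilityMeasure (Measure.map (X i) ℙ) :=
      Measure.isProbabilityMeasure_map (hmeas i).aemeasurable
    refine Measure.ext_of_Iic _ _ fun x => ?_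
    rw [Measure.map_apply (hmeas i) measurableSet_Iic]
    have hXc : X i ⁻¹' Set.Iic x = {ω | x < X i ω}ᶜ := by
      ext ω; simp [Set.mem_Iic, not_lt]
    have hms : MeasurableSet {ω | x < X i ω} := measurableSet_lt measurable_const (hmeas i)
    have hRHS : expMeasure (μ i) (Set.Iic x)
        = ENNReal.ofReal (if 0 ≤ x then 1 - Real.exp (-(μ i * x)) else 0) := by
      rw [ArmitageDollAux.expMeasure_eq, withDensity_apply _ measurableSet_Iic,
        lintegral_exponentialPDF_eq_antiDeriv (hμ i) x]
    rw [hXc, hRHS, measure_compl hms (measure_ne_top _ _), measure_univ]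
    by_cases hx : 0 ≤ x
    · rw [if_pos hx, hexp i x hx]
      rw [← ENNReal.ofReal_one, ← ENNReal.ofReal_sub _ (Real.exp_pos _).le]
      congr 2
      rw [neg_mul]
    · rw [if_neg hx]
      have h1 : ℙ {ω | 0 < X i ω} ≤ ℙ {ω | x < X i ω} :=
        measure_mono fun ω hω => lt_trans (lt_of_not_ge hx) hω
      have h2 : ℙ {ω | 0 < X i ω} = 1 := by
        rw [hexp i 0 le_rfl]; simp
      have h3 : ℙ {ω | x < X i ω} = 1 :=
        le_antisymm prob_le_one (h2 ▸ h1)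
      rw [h3, tsub_self, ENNReal.ofReal_zero]
  have hT : Measurable fun ω (i : Fin k) => X i ω := measurable_pi_lambda _ hmeas
  have hjoint : Measure.map (fun ω (i : Fin k) => X i ω) ℙ
      = Measure.pi (fun i => expMeasure (μ i)) := by
    refine (Measure.pi_eq fun s hs => ?_).symm
    rw [Measure.map_apply hT (MeasurableSet.univ_pi hs)]
    have hpre : (fun ω (i : Fin k) => X i ω) ⁻¹' Set.pi Set.univ s = ⋂ i, X i ⁻¹' s i := by
      ext ω; simp [Set.mem_pi]
    rw [hpre]
    have h1 : ℙ (⋂ i, X i ⁻¹' s i) = ℙ (⋂ i ∈ Finset.univ, X i ⁻¹' s i) := by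
      congr 1; simp
    rw [h1, hindep.measure_inter_preimage_eq_mul Finset.univ (fun i _ => hs i)]
    exact Finset.prod_congr rfl fun i _ => by
      rw [← hmap i, Measure.map_apply (hmeas i) (hs i)]
  have hA : ∀ t : ℝ, ℙ {ω | ∑ i, X i ω ≤ t}
      = Measure.pi (fun i => expMeasure (μ i)) {x : Fin k → ℝ | ∑ i, x i ≤ t} := by
    intro t
    have hS : MeasurableSet {x : Fin k → ℝ | ∑ i, x i ≤ t} :=
      measurableSet_le (Finset.measurable_sum _ fun i _ => measurable_pi_apply i)
        measurable_const
    rw [← hjoint, Measure.map_apply hT hS]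
    rfl
  have hC0 : (0:ℝ) < ∏ i, μ i := Finset.prod_pos fun i _ => hμ i
  have hfac : (0:ℝ) < (k.factorial : ℝ) := by positivity
  have hbound : ∀ t ∈ Set.Ioi (0:ℝ),
      ((∏ i, μ i) / (k.factorial:ℝ)) * Real.exp (-(∑ i, μ i) * t)
          ≤ (ℙ {ω | ∑ i, X i ω ≤ t}).toReal / t ^ k ∧
      (ℙ {ω | ∑ i, X i ω ≤ t}).toReal / t ^ k ≤ (∏ i, μ i) / (k.factorial:ℝ) := by
    intro t ht
    have ht' : (0:ℝ) < t := ht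
    have hb := ArmitageDollAux.simplex_bounds k μ hμ t ht'.le
    rw [← hA t] at hb
    have hne : ℙ {ω | ∑ i, X i ω ≤ t} ≠ ⊤ := measure_ne_top _ _
    have htk : (0:ℝ) < t ^ k := pow_pos ht' k
    constructor
    · rw [le_div_iff₀ htk]
      have h1 := (ENNReal.ofReal_le_iff_le_toReal hne).1 hb.1
      have h2 : (∏ i, μ i) / (k.factorial:ℝ) * Real.exp (-(∑ i, μ i) * t) * t ^ k
          = (∏ i, μ i) / (k.factorial:ℝ) * t ^ k * Real.exp (-(∑ i, μ i) * t) := by ring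
      rw [h2]; exact h1
    · rw [div_le_iff₀ htk]
      exact ENNReal.toReal_le_of_le_ofReal (by positivity) hb.2
  have hg : Filter.Tendsto
      (fun t : ℝ => ((∏ i, μ i) / (k.factorial:ℝ)) * Real.exp (-(∑ i, μ i) * t))
      (nhdsWithin 0 (Set.Ioi 0)) (nhds ((∏ i, μ i) / (k.factorial:ℝ))) := by
    have hc : Continuous fun t : ℝ =>
        ((∏ i, μ i) / (k.factorial:ℝ)) * Real.exp (-(∑ i, μ i) * t) := by
      continuity
    have h0 := (hc.tendsto 0).mono_left (nhdsWithin_le_nhds (s := Set.Ioi (0:ℝ)))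
    simpa using h0
  refine tendsto_of_tendsto_of_tendsto_of_le_of_le' hg tendsto_const_nhds ?_ ?_
  · exact eventually_nhdsWithin_of_forall fun t ht => (hbound t ht).1
  · exact eventually_nhdsWithin_of_forall fun t ht => (hbound t ht).2
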